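/- Let Γ = [1/2; r_1, r_2; α] be a blockchain oceanic game with two major miners, where r_1, r_2 ≥ 0, α > 0, r_1 + r_2 + α = 1, r_1 ≤ 1/2, r_2 ≤ 1/2 and α ≤ 1/2 (region Δ_2, the balance-of-power region in which no single entity holds a majority). Then the value of miner 1 is φ_1 = ((1 − 2·r_2)/(2·α))². -/

import Mathlib

open MeasureTheory Finset

/-- The uniform probability measure on the unit cube `[0,1]^m`. -/
noncomputable def cubeMeasure (m : ℕ) : Measure (Fin m → ℝ) :=
  Measure.pi fun _ => volume.restrict (Set.Icc (0:ℝ) 1)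

/-- The event that miner `i` is pivotal: with `r(x) = ∑_j r_j · 1{X_j < X_i}`,
`r(X_i) + α·X_i < q ≤ r(X_i) + α·X_i + r_i`. -/
def pivotEvent (m : ℕ) (q α : ℝ) (r : Fin m → ℝ) (i : Fin m) : Set (Fin m → ℝ) :=
  {x | (∑ j, if x j < x i then r j else 0) + α * x i < q ∧
       q ≤ (∑ j, if x j < x i then r j else 0) + α * x i + r i}

/-- The value `φ_i` of major miner `i` in the blockchain oceanic game
`Γ = [q; r_1,…,r_m; α]`. -/
noncomputable def minerValue (m : ℕ) (q α : ℝ) (r : Fin m → ℝ) (i : Fin m) : ℝ :=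
  (cubeMeasure m (pivotEvent m q α r i)).toReal

/-- The oceanic value `Φ = 1 - ∑_i φ_i`. -/
noncomputable def oceanicValue (m : ℕ) (q α : ℝ) (r : Fin m → ℝ) : ℝ :=
  1 - ∑ i, minerValue m q α r i

theorem stmt_6 (α r₁ r₂ : ℝ) (hr₁ : 0 ≤ r₁) (hr₂ : 0 ≤ r₂) (hα : 0 < α)
    (htot : r₁ + r₂ + α = 1) (h₁ : r₁ ≤ 1 / 2) (h₂ : r₂ ≤ 1 / 2) (h₃ : α ≤ 1 / 2) :
    minerValue 2 (1 / 2) α ![r₁, r₂] 0 = ((1 - 2 * r₂) / (2 * α)) ^ 2 := by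
  have hα' : α ≠ 0 := ne_of_gt hα
  have hab : α * ((1 - 2 * r₂) / (2 * α)) = 1 / 2 - r₂ := by field_simp
  have hac : α * ((1 / 2 - r₁) / α) = 1 / 2 - r₁ := by field_simp
  have hcb : 1 - (1 / 2 - r₁) / α = (1 - 2 * r₂) / (2 * α) := by field_simp; linarith
  set b : ℝ := (1 - 2 * r₂) / (2 * α) with hbdef
  set c : ℝ := (1 / 2 - r₁) / α with hcdef
  have hb0 : 0 ≤ b := div_nonneg (by linarith) (by linarith)
  have hb1 : b ≤ 1 := by rw [hbdef, div_le_one (by linarith)]; linarith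
  have hc0 : 0 ≤ c := div_nonneg (by linarith) hα.le
  have hc1 : c ≤ 1 := by linarith
  set μ : Measure ℝ := volume.restrict (Set.Icc (0:ℝ) 1) with hμdef
  set S : Set (ℝ × ℝ) := {p | (if p.2 < p.1 then r₂ else 0) + α * p.1 < 1/2 ∧
      1/2 ≤ (if p.2 < p.1 then r₂ else 0) + α * p.1 + r₁} with hSdef
  have hfm : Measurable fun p : ℝ × ℝ => (if p.2 < p.1 then r₂ else 0) + α * p.1 :=
    (Measurable.ite (measurableSet_lt measurable_snd measurable_fst) measurable_const
      measurable_const).add (measurable_const.mul measurable_fst)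
  have hSm : MeasurableSet S :=
    (hfm measurableSet_Iio).inter ((hfm.add_const r₁) measurableSet_Ici)
  have hev : pivotEvent 2 (1/2) α ![r₁, r₂] 0
      = (MeasurableEquiv.piFinTwo fun _ => ℝ) ⁻¹' S := by
    ext x
    have hsum : (∑ j : Fin 2, if x j < x 0 then (![r₁, r₂] : Fin 2 → ℝ) j else 0)
        = (if x 1 < x 0 then r₂ else 0) := by
      simp [Fin.sum_univ_two, lt_irrefl]
    simp only [pivotEvent, Set.mem_setOf_eq, Set.mem_preimage, hSdef, hsum]
    exact Iff.rfl
  have hIio : ∀ x : ℝ, x ∈ Set.Icc (0:ℝ) 1 → μ (Set.Iio x) = ENNReal.ofReal x := by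
    intro x hx
    rw [hμdef, Measure.restrict_apply measurableSet_Iio]
    have : Set.Iio x ∩ Set.Icc 0 1 = Set.Ico 0 x := by
      ext y
      simp only [Set.mem_inter_iff, Set.mem_Iio, Set.mem_Icc, Set.mem_Ico]
      constructor
      · rintro ⟨h1, h2, _⟩; exact ⟨h2, h1⟩
      · rintro ⟨h1, h2⟩; exact ⟨h2, h1, by linarith [hx.2]⟩
    rw [this, Real.volume_Ico, sub_zero]
  have hIci : ∀ x : ℝ, x ∈ Set.Icc (0:ℝ) 1 → μ (Set.Ici x) = ENNReal.ofReal (1 - x) := by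
    intro x hx
    rw [hμdef, Measure.restrict_apply measurableSet_Ici]
    have : Set.Ici x ∩ Set.Icc 0 1 = Set.Icc x 1 := by
      ext y
      simp only [Set.mem_inter_iff, Set.mem_Ici, Set.mem_Icc]
      constructor
      · rintro ⟨h1, _, h3⟩; exact ⟨h1, h3⟩
      · rintro ⟨h1, h2⟩; exact ⟨h1, by linarith [hx.1], h2⟩
    rw [this, Real.volume_Icc]
  have hkey : ∀ x ∈ Set.Icc (0:ℝ) 1, μ (Prod.mk x ⁻¹' S)
      = (Set.Ico 0 b).indicator ENNReal.ofReal x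
        + (Set.Ico c 1).indicator (fun t => ENNReal.ofReal (1 - t)) x := by
    intro x hx
    obtain ⟨hx0, hx1⟩ := hx
    have hsl : Prod.mk x ⁻¹' S =
        (if r₂ + α * x < 1/2 ∧ 1/2 ≤ r₂ + α * x + r₁ then Set.Iio x else ∅) ∪
        (if α * x < 1/2 ∧ 1/2 ≤ α * x + r₁ then Set.Ici x else ∅) := by
      ext y
      simp only [Set.mem_preimage, hSdef, Set.mem_setOf_eq, Set.mem_union,
        Set.mem_ite_empty_right, Set.mem_Iio, Set.mem_Ici]
      by_cases hy : y < x
      · simp only [if_pos hy]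
        constructor
        · intro h; exact Or.inl ⟨⟨by linarith [h.1], by linarith [h.2]⟩, hy⟩
        · rintro (⟨h, _⟩ | ⟨h, hxy⟩)
          · exact ⟨by linarith [h.1], by linarith [h.2]⟩
          · exact absurd hy (not_lt.2 hxy)
      · simp only [if_neg hy, zero_add]
        constructor
        · intro h; exact Or.inr ⟨h, not_lt.1 hy⟩
        · rintro (⟨_, hyx⟩ | ⟨h, _⟩)
          · exact absurd hyx hy
          · exact h
    have hdisj : Disjoint
        (if r₂ + α * x < 1/2 ∧ 1/2 ≤ r₂ + α * x + r₁ then Set.Iio x else ∅)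
        (if α * x < 1/2 ∧ 1/2 ≤ α * x + r₁ then Set.Ici x else ∅) := by
      apply Set.disjoint_of_subset _ _ (Set.Iio_disjoint_Ici (le_refl x))
      · split_ifs <;> simp
      · split_ifs <;> simp
    have hm2 : MeasurableSet
        (if α * x < 1/2 ∧ 1/2 ≤ α * x + r₁ then Set.Ici x else ∅) := by
      split_ifs
      · exact measurableSet_Ici
      · exact MeasurableSet.empty
    rw [hsl, measure_union hdisj hm2]
    congr 1
    · by_cases hP : r₂ + α * x < 1/2 ∧ 1/2 ≤ r₂ + α * x + r₁
      · rw [if_pos hP, hIio x ⟨hx0, hx1⟩, Set.indicator_of_mem]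
        refine ⟨hx0, ?_⟩
        have : α * x < α * b := by rw [hab]; linarith [hP.1]
        exact lt_of_mul_lt_mul_left this hα.le
      · rw [if_neg hP, measure_empty, Set.indicator_of_notMem]
        rintro ⟨h0, hxb⟩
        apply hP
        have hax : α * x < α * b := (mul_lt_mul_iff_right₀ hα).2 hxb
        have hax0 : 0 ≤ α * x := mul_nonneg hα.le h0
        rw [hab] at hax
        exact ⟨by linarith, by linarith⟩
    · by_cases hQ : α * x < 1/2 ∧ 1/2 ≤ α * x + r₁
      · rw [if_pos hQ, hIci x ⟨hx0, hx1⟩]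
        by_cases hx1' : x < 1
        · rw [Set.indicator_of_mem]
          refine ⟨?_, hx1'⟩
          have : α * c ≤ α * x := by rw [hac]; linarith [hQ.2]
          exact le_of_mul_le_mul_left this hα
        · have hx1'' : x = 1 := le_antisymm hx1 (not_lt.1 hx1')
          rw [Set.indicator_of_notMem (by simp [hx1''])]
          simp [hx1'']
      · rw [if_neg hQ, measure_empty, Set.indicator_of_notMem]
        rintro ⟨hcx, hx1'⟩
        apply hQ
        have h1 : α * x < α * 1 := (mul_lt_mul_iff_right₀ hα).2 hx1'
        have h2 : α * c ≤ α * x := (mul_le_mul_iff_right₀ hα).2 hcx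
        rw [hac] at h2
        exact ⟨by linarith, by linarith⟩
  have hmeasmain : cubeMeasure 2 (pivotEvent 2 (1/2) α ![r₁, r₂] 0)
      = ENNReal.ofReal (b ^ 2) := by
    have hpres := (measurePreserving_piFinTwo (fun _ : Fin 2 => μ)).measure_preimage
      hSm.nullMeasurableSet
    rw [hev]
    show (Measure.pi fun _ : Fin 2 => μ) _ = _
    rw [hpres, Measure.prod_apply hSm]
    have hres : ∫⁻ x, μ (Prod.mk x ⁻¹' S) ∂μ
        = ∫⁻ x in Set.Icc (0:ℝ) 1, μ (Prod.mk x ⁻¹' S) := by rw [hμdef]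
    rw [hres, setLIntegral_congr_fun measurableSet_Icc hkey]
    have hmi1 : Measurable ((Set.Ico (0:ℝ) b).indicator ENNReal.ofReal) :=
      ENNReal.measurable_ofReal.indicator measurableSet_Ico
    rw [lintegral_add_left hmi1]
    have hint1 : ∫⁻ x in Set.Icc (0:ℝ) 1, (Set.Ico 0 b).indicator ENNReal.ofReal x
        = ENNReal.ofReal (b ^ 2 / 2) := by
      rw [lintegral_indicator measurableSet_Ico, Measure.restrict_restrict measurableSet_Ico]
      have he : Set.Ico 0 b ∩ Set.Icc (0:ℝ) 1 = Set.Ico 0 b :=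
        Set.inter_eq_left.2 fun y hy => ⟨hy.1, le_trans hy.2.le hb1⟩
      rw [he, Measure.restrict_congr_set Ico_ae_eq_Ioc]
      have h := ofReal_integral_eq_lintegral_ofReal (μ := volume.restrict (Set.Ioc (0:ℝ) b))
        (f := fun a : ℝ => a) continuous_id.integrableOn_Ioc
        ((ae_restrict_iff' measurableSet_Ioc).2 (ae_of_all _ fun y hy => hy.1.le))
      rw [← h, ← intervalIntegral.integral_of_le hb0, integral_id]
      norm_num
    have hint2 : ∫⁻ x in Set.Icc (0:ℝ) 1,
        (Set.Ico c 1).indicator (fun t => ENNReal.ofReal (1 - t)) x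
        = ENNReal.ofReal (b ^ 2 / 2) := by
      rw [lintegral_indicator measurableSet_Ico, Measure.restrict_restrict measurableSet_Ico]
      have he : Set.Ico c 1 ∩ Set.Icc (0:ℝ) 1 = Set.Ico c 1 :=
        Set.inter_eq_left.2 fun y hy => ⟨le_trans hc0 hy.1, hy.2.le⟩
      rw [he, Measure.restrict_congr_set Ico_ae_eq_Ioc]
      have h := ofReal_integral_eq_lintegral_ofReal (μ := volume.restrict (Set.Ioc c 1))
        (f := fun a : ℝ => 1 - a) (continuous_const.sub continuous_id).integrableOn_Ioc
        ((ae_restrict_iff' measurableSet_Ioc).2 (ae_of_all _ fun y hy => by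
          simp only [Pi.zero_apply, sub_nonneg]; exact hy.2))
      rw [← h, ← intervalIntegral.integral_of_le hc1]
      have h2 : ∫ x in c..1, (1 - x) = (1 - c) - (1 ^ 2 - c ^ 2) / 2 := by
        rw [intervalIntegral.integral_sub intervalIntegrable_const
          intervalIntegral.intervalIntegrable_id, intervalIntegral.integral_const, integral_id]
        simp
      rw [h2]
      congr 1
      nlinarith [hcb]
    rw [hint1, hint2, ← ENNReal.ofReal_add (by positivity) (by positivity)]
    congr 1
    ring
  rw [minerValue, hmeasmain, ENNReal.toReal_ofReal (by positivity)]
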